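/- arXiv:2503.04040 — 4 statements merged into one kernel-verified Lean document; each statement's English description precedes it below -/
import Mathlib

section
/- Let B ∈ ℂ^{N×N} be Hermitian positive definite and A ∈ ℂ^{N×d}. Then for every Φ ∈ ℂ^{N×d}, the matrix Aᴴ B⁻¹ A − (Aᴴ Φ + Φᴴ A − Φᴴ B Φ) equals (Φ − B⁻¹A)ᴴ B (Φ − B⁻¹A) and hence is positive semidefinite; in particular Aᴴ Φ + Φᴴ A − Φᴴ B Φ ⪯ Aᴴ B⁻¹ A in the Loewner order, with equality if and only if Φ = B⁻¹ A. -/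
open Matrix
open scoped ComplexOrder

/-- Matrix quadratic-transform inequality: for Hermitian positive definite `B` and
any `Φ`, `Aᴴ B⁻¹ A − (Aᴴ Φ + Φᴴ A − Φᴴ B Φ) = (Φ − B⁻¹A)ᴴ B (Φ − B⁻¹A)` is positive
semidefinite, so `Aᴴ Φ + Φᴴ A − Φᴴ B Φ ⪯ Aᴴ B⁻¹ A` with equality iff `Φ = B⁻¹ A`. -/
theorem stmt_6 {N d : ℕ} (B : Matrix (Fin N) (Fin N) ℂ) (hB : B.PosDef)
    (A : Matrix (Fin N) (Fin d) ℂ) (Φ : Matrix (Fin N) (Fin d) ℂ) :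
    Aᴴ * B⁻¹ * A - (Aᴴ * Φ + Φᴴ * A - Φᴴ * B * Φ) =
      (Φ - B⁻¹ * A)ᴴ * B * (Φ - B⁻¹ * A) ∧
    (Aᴴ * B⁻¹ * A - (Aᴴ * Φ + Φᴴ * A - Φᴴ * B * Φ)).PosSemidef ∧
    (Aᴴ * Φ + Φᴴ * A - Φᴴ * B * Φ = Aᴴ * B⁻¹ * A ↔ Φ = B⁻¹ * A) := by
  have hU : IsUnit B.det := isUnit_iff_isUnit_det _ |>.1 hB.isUnit
  have hBi : B * B⁻¹ = 1 := mul_nonsing_inv B hU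
  have hiB : B⁻¹ * B = 1 := nonsing_inv_mul B hU
  have hH : Bᴴ = B := hB.isHermitian
  have hiH : (B⁻¹)ᴴ = B⁻¹ := by rw [conjTranspose_nonsing_inv, hH]
  have h1 : Φᴴ * B * (B⁻¹ * A) = Φᴴ * A := by
    rw [Matrix.mul_assoc, ← Matrix.mul_assoc B, hBi, Matrix.one_mul]
  have h2 : (B⁻¹ * A)ᴴ * B * Φ = Aᴴ * Φ := by
    rw [conjTranspose_mul, hiH, Matrix.mul_assoc, Matrix.mul_assoc,
      ← Matrix.mul_assoc B⁻¹, hiB, Matrix.one_mul]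
  have h3 : (B⁻¹ * A)ᴴ * B * (B⁻¹ * A) = Aᴴ * B⁻¹ * A := by
    rw [conjTranspose_mul, hiH, Matrix.mul_assoc, Matrix.mul_assoc,
      ← Matrix.mul_assoc B, hBi, Matrix.one_mul, ← Matrix.mul_assoc]
  have key : Aᴴ * B⁻¹ * A - (Aᴴ * Φ + Φᴴ * A - Φᴴ * B * Φ) =
      (Φ - B⁻¹ * A)ᴴ * B * (Φ - B⁻¹ * A) := by
    rw [conjTranspose_sub, Matrix.sub_mul, Matrix.sub_mul, Matrix.mul_sub,
      Matrix.mul_sub, h1, h2, h3]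
    abel
  refine ⟨key, ?_, ?_⟩
  · rw [key]
    exact hB.posSemidef.conjTranspose_mul_mul_same _
  · constructor
    · intro h
      have hz : (Φ - B⁻¹ * A)ᴴ * B * (Φ - B⁻¹ * A) = 0 := by
        rw [← key, h, sub_self]
      set M := Φ - B⁻¹ * A with hM
      have hcol : ∀ j, (fun i => M i j) = 0 := by
        intro j
        by_contra hx
        have hpos := hB.dotProduct_mulVec_pos hx
        have hdq : star (fun i => M i j) ⬝ᵥ B *ᵥ (fun i => M i j) = (Mᴴ * B * M) j j := by
          rw [Matrix.mul_assoc]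
          simp only [Matrix.mul_apply, Matrix.mulVec, dotProduct,
            Matrix.conjTranspose_apply, Pi.star_apply]
        rw [hdq, hz] at hpos
        simp at hpos
      have hMz : M = 0 := by
        ext i j
        exact congrFun (hcol j) i
      exact sub_eq_zero.mp hMz
    · intro h
      subst h
      have h2' : Aᴴ * (B⁻¹ * A) = Aᴴ * B⁻¹ * A := by rw [Matrix.mul_assoc]
      have h3' : (B⁻¹ * A)ᴴ * A = Aᴴ * B⁻¹ * A := by
        rw [conjTranspose_mul, hiH, Matrix.mul_assoc]
      rw [h3, h2', h3']
      abel
end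

section
/- Let B ∈ ℂ^{N×N} be Hermitian positive definite, F ∈ ℂ^{d×d} Hermitian positive semidefinite, and A ∈ ℂ^{N×d}. Then for every Φ ∈ ℂ^{N×d}, Re tr(F(Aᴴ Φ + Φᴴ A − Φᴴ B Φ)) ≤ Re tr(F Aᴴ B⁻¹ A). -/
open Matrix
open scoped ComplexOrder

lemma trace_conjTranspose_mul_self_re_nonneg {m n : ℕ} (X : Matrix (Fin m) (Fin n) ℂ) :
    0 ≤ (Matrix.trace (Xᴴ * X)).re := by
  rw [Matrix.trace]
  simp only [Matrix.diag, Matrix.mul_apply, Matrix.conjTranspose_apply]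
  rw [Complex.re_sum]
  refine Finset.sum_nonneg fun i _ => ?_
  rw [Complex.re_sum]
  refine Finset.sum_nonneg fun j _ => ?_
  simpa [Complex.normSq_apply] using Complex.normSq_nonneg (X j i)

/-- Weighted-trace form of the matrix quadratic transform: for Hermitian positive
definite `B`, Hermitian positive semidefinite `F`, and any `Φ`,
`Re tr(F(Aᴴ Φ + Φᴴ A − Φᴴ B Φ)) ≤ Re tr(F Aᴴ B⁻¹ A)`. -/
theorem stmt_7 {N d : ℕ} (B : Matrix (Fin N) (Fin N) ℂ) (hB : B.PosDef)
    (F : Matrix (Fin d) (Fin d) ℂ) (hF : F.PosSemidef)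
    (A : Matrix (Fin N) (Fin d) ℂ) (Φ : Matrix (Fin N) (Fin d) ℂ) :
    (Matrix.trace (F * (Aᴴ * Φ + Φᴴ * A - Φᴴ * B * Φ))).re ≤
      (Matrix.trace (F * (Aᴴ * B⁻¹ * A))).re := by
  set D := Φ - B⁻¹ * A with hD
  have hBH : Bᴴ = B := hB.isHermitian.eq
  have hBiH : (B⁻¹)ᴴ = B⁻¹ := (hB.isHermitian.inv).eq
  have hBi1 : B * B⁻¹ = 1 :=
    Matrix.mul_nonsing_inv B ((Matrix.isUnit_iff_isUnit_det B).mp hB.isUnit)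
  have hBi2 : B⁻¹ * B = 1 := Matrix.nonsing_inv_mul B (Matrix.isUnit_iff_isUnit_det B |>.1 hB.isUnit)
  -- key algebraic identity
  have key : Dᴴ * B * D = Φᴴ * B * Φ - Φᴴ * A - Aᴴ * Φ + Aᴴ * B⁻¹ * A := by
    rw [hD]
    simp only [Matrix.conjTranspose_sub, Matrix.conjTranspose_mul, hBiH]
    rw [Matrix.sub_mul, Matrix.sub_mul, Matrix.mul_sub, Matrix.mul_sub]
    have h1 : Aᴴ * B⁻¹ * B = Aᴴ := by rw [Matrix.mul_assoc, hBi2, Matrix.mul_one]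
    have h2 : Φᴴ * B * (B⁻¹ * A) = Φᴴ * A := by
      rw [Matrix.mul_assoc, ← Matrix.mul_assoc B, hBi1, Matrix.one_mul]
    have h3 : Aᴴ * B⁻¹ * B * (B⁻¹ * A) = Aᴴ * B⁻¹ * A := by
      rw [h1, ← Matrix.mul_assoc]
    rw [h1, h2]
    rw [show Aᴴ * (B⁻¹ * A) = Aᴴ * B⁻¹ * A from (Matrix.mul_assoc _ _ _).symm]
    abel
  -- rewrite the difference of traces
  have hdiff : Matrix.trace (F * (Aᴴ * B⁻¹ * A)) -
      Matrix.trace (F * (Aᴴ * Φ + Φᴴ * A - Φᴴ * B * Φ)) = Matrix.trace (F * (Dᴴ * B * D)) := by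
    rw [key]
    simp only [Matrix.mul_add, Matrix.mul_sub, Matrix.trace_add, Matrix.trace_sub]
    ring
  -- the RHS trace has nonnegative real part
  obtain ⟨L, hL⟩ : ∃ L : Matrix (Fin d) (Fin d) ℂ, F = Lᴴ * L :=
    by open scoped MatrixOrder in exact CStarAlgebra.nonneg_iff_eq_star_mul_self.mp hF.nonneg
  obtain ⟨S, hS⟩ : ∃ S : Matrix (Fin N) (Fin N) ℂ, B = Sᴴ * S :=
    by open scoped MatrixOrder in exact CStarAlgebra.nonneg_iff_eq_star_mul_self.mp hB.posSemidef.nonneg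
  have hnn : 0 ≤ (Matrix.trace (F * (Dᴴ * B * D))).re := by
    have : F * (Dᴴ * B * D) = Lᴴ * (L * Dᴴ * Sᴴ * (S * D)) := by
      rw [hL, hS]; simp only [Matrix.mul_assoc]
    rw [this, Matrix.trace_mul_comm]
    have h2 : L * Dᴴ * Sᴴ * (S * D) * Lᴴ = (S * D * Lᴴ)ᴴ * (S * D * Lᴴ) := by
      simp only [Matrix.conjTranspose_mul, Matrix.conjTranspose_conjTranspose]
      simp only [Matrix.mul_assoc]
    rw [h2]
    exact trace_conjTranspose_mul_self_re_nonneg _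
  have := hnn
  rw [← hdiff] at this
  have := (Complex.sub_re _ _) ▸ this
  linarith [Complex.sub_re (Matrix.trace (F * (Aᴴ * B⁻¹ * A)))
    (Matrix.trace (F * (Aᴴ * Φ + Φᴴ * A - Φᴴ * B * Φ))), this]
end

section
/- Let S ∈ ℂ^{d×d} be Hermitian positive semidefinite. Then for every Hermitian positive semidefinite Γ ∈ ℂ^{d×d}, log det(I + S) ≥ log det(I + Γ) − tr(Γ) + Re tr((I + Γ) S (I + S)⁻¹), with equality when Γ = S. In particular, log det(I + S) = max over Hermitian positive semidefinite Γ of [log det(I + Γ) − tr(Γ) + Re tr((I + Γ) S (I + S)⁻¹)]. -/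
open Matrix
open scoped ComplexOrder

section Helpers
variable {n : Type*} [Fintype n] [DecidableEq n]

lemma my_trace_eq_sum {A : Matrix n n ℂ} (hA : A.IsHermitian) :
    A.trace = ∑ i, (hA.eigenvalues i : ℂ) := by
  exact hA.trace_eq_sum_eigenvalues

lemma my_posdef_conj {B R : Matrix n n ℂ} (hB : B.PosDef) (hR : R.IsHermitian)
    (hRu : IsUnit R) : (R * B * R).PosDef := by
  have := hB.conjTranspose_mul_mul_same (B := R) (Matrix.mulVec_injective_iff_isUnit.mpr hRu)
  rwa [hR.eq] at this

open scoped MatrixOrder in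
lemma my_key {A B : Matrix n n ℂ} (hA : A.PosDef) (hB : B.PosDef) :
    Real.log B.det.re ≤ Real.log A.det.re + ((B * A⁻¹).trace.re - Fintype.card n) := by
  have hAi : (A⁻¹).PosDef := hA.inv
  set R := CFC.sqrt (A⁻¹) with hRdef
  have hRps : R.PosSemidef := (CFC.sqrt_nonneg _).posSemidef
  have hRR : R * R = A⁻¹ := CFC.sqrt_mul_sqrt_self _ hAi.posSemidef.nonneg
  have hdR : R.det * R.det = (A⁻¹).det := by rw [← Matrix.det_mul, hRR]
  have hRu : IsUnit R := by
    rw [Matrix.isUnit_iff_isUnit_det]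
    refine (isUnit_iff_ne_zero).2 fun h => hAi.det_pos.ne' ?_
    rw [← hdR, h, zero_mul]
  have hM : (R * B * R).PosDef := my_posdef_conj hB hRps.1 hRu
  set μ := hM.1.eigenvalues with hμdef
  have hμpos : ∀ i, 0 < μ i := hM.eigenvalues_pos
  -- trace identity
  have htrace : (R * B * R).trace = (B * A⁻¹).trace := by
    rw [Matrix.trace_mul_cycle, hRR, Matrix.trace_mul_comm]
  have htr : (B * A⁻¹).trace.re = ∑ i, μ i := by
    rw [← htrace, my_trace_eq_sum hM.1]
    simp
    rfl
  -- determinant identity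
  have hdet : (R * B * R).det = (A⁻¹).det * B.det := by
    rw [Matrix.det_mul, Matrix.det_mul, mul_comm R.det B.det, mul_assoc, hdR, mul_comm]
  have hdetμ : (R * B * R).det.re = ∏ i, μ i := by
    rw [hM.1.det_eq_prod_eigenvalues]
    norm_cast
  -- real positive determinants
  have haim : A.det.im = 0 := ((Complex.lt_def.mp hA.det_pos).2).symm
  have hbim : B.det.im = 0 := ((Complex.lt_def.mp hB.det_pos).2).symm
  have ha : 0 < A.det.re := (Complex.lt_def.mp hA.det_pos).1
  have hb : 0 < B.det.re := (Complex.lt_def.mp hB.det_pos).1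
  have hAinvdet : (A⁻¹).det = A.det⁻¹ := by
    rw [Matrix.det_nonsing_inv, Ring.inverse_eq_inv]
  have hratio : (∏ i, μ i) = B.det.re / A.det.re := by
    rw [← hdetμ, hdet, hAinvdet]
    have hAc : A.det = (A.det.re : ℂ) := Complex.ext rfl (by simp [haim])
    have hBc : B.det = (B.det.re : ℂ) := Complex.ext rfl (by simp [hbim])
    rw [hAc, hBc, ← Complex.ofReal_inv, ← Complex.ofReal_mul, Complex.ofReal_re,
      div_eq_inv_mul]
    simp
  -- log inequality
  have hlog : Real.log (∏ i, μ i) = ∑ i, Real.log (μ i) :=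
    Real.log_prod (fun i _ => (hμpos i).ne')
  have hle : ∑ i, Real.log (μ i) ≤ ∑ i, (μ i - 1) :=
    Finset.sum_le_sum fun i _ => Real.log_le_sub_one_of_pos (hμpos i)
  have hsum : ∑ i, (μ i - 1) = (B * A⁻¹).trace.re - Fintype.card n := by
    rw [Finset.sum_sub_distrib, htr]
    simp
  have : Real.log (B.det.re / A.det.re) ≤ (B * A⁻¹).trace.re - Fintype.card n := by
    rw [← hratio, hlog]
    exact hle.trans_eq hsum
  rw [Real.log_div hb.ne' ha.ne'] at this
  linarith

end Helpers

/-- Matrix Lagrangian dual transform: for Hermitian positive semidefinite `S`,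
`log det(I + S) ≥ log det(I + Γ) − tr Γ + Re tr((I + Γ) S (I + S)⁻¹)` for every
Hermitian positive semidefinite `Γ`, with equality when `Γ = S`; hence
`log det(I + S)` is the maximum of the right-hand side over such `Γ`. -/
theorem stmt_9 {d : ℕ} (S : Matrix (Fin d) (Fin d) ℂ) (hS : S.PosSemidef) :
    (∀ Γ : Matrix (Fin d) (Fin d) ℂ, Γ.PosSemidef →
      Real.log ((1 + Γ : Matrix (Fin d) (Fin d) ℂ).det.re) - (Matrix.trace Γ).re +
          (Matrix.trace ((1 + Γ) * S * (1 + S)⁻¹)).re ≤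
        Real.log ((1 + S : Matrix (Fin d) (Fin d) ℂ).det.re)) ∧
    Real.log ((1 + S : Matrix (Fin d) (Fin d) ℂ).det.re) - (Matrix.trace S).re +
        (Matrix.trace ((1 + S) * S * (1 + S)⁻¹)).re =
      Real.log ((1 + S : Matrix (Fin d) (Fin d) ℂ).det.re) := by
  have hA : (1 + S : Matrix (Fin d) (Fin d) ℂ).PosDef := Matrix.PosDef.one.add_posSemidef hS
  have hAinv : (1 + S) * (1 + S)⁻¹ = 1 :=
    Matrix.mul_nonsing_inv _ ((Matrix.isUnit_iff_isUnit_det _).mp hA.isUnit)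
  have hcomm : (1 + S) * S = S * (1 + S) := by noncomm_ring
  have heq : (1 + S) * S * (1 + S)⁻¹ = S := by
    rw [hcomm, Matrix.mul_assoc, hAinv, Matrix.mul_one]
  constructor
  · intro Γ hΓ
    have hB : (1 + Γ : Matrix (Fin d) (Fin d) ℂ).PosDef := Matrix.PosDef.one.add_posSemidef hΓ
    have hkey := my_key hA hB
    have hSA : S * (1 + S)⁻¹ = 1 - (1 + S)⁻¹ := by
      have h2 : (1 + S) - 1 = S := add_sub_cancel_left 1 S
      calc S * (1 + S)⁻¹ = ((1 + S) - 1) * (1 + S)⁻¹ := by rw [h2]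
        _ = 1 - (1 + S)⁻¹ := by rw [Matrix.sub_mul, hAinv, Matrix.one_mul]
    have htr1 : ((1 + Γ) * S * (1 + S)⁻¹ : Matrix (Fin d) (Fin d) ℂ).trace
        = (1 + Γ).trace - ((1 + Γ) * (1 + S)⁻¹).trace := by
      rw [Matrix.mul_assoc, hSA, Matrix.mul_sub, Matrix.mul_one, Matrix.trace_sub]
    have htr2 : ((1 + Γ : Matrix (Fin d) (Fin d) ℂ)).trace = (d : ℂ) + Γ.trace := by
      rw [Matrix.trace_add, Matrix.trace_one]
      simp
    have h1 : (((1 + Γ) * S * (1 + S)⁻¹ : Matrix (Fin d) (Fin d) ℂ)).trace.re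
        = (d : ℝ) + Γ.trace.re - ((1 + Γ) * (1 + S)⁻¹).trace.re := by
      rw [htr1, htr2]
      simp
    rw [h1]
    simp only [Fintype.card_fin] at hkey
    linarith
  · rw [heq]
    ring
end

section
/- Let F ∈ ℂ^{L_R×N} and G ∈ ℂ^{L_T×M} have all entries of modulus 1, let Σ ∈ ℂ^{L_R×L_T} have all entries of modulus at most 1, let H = Fᴴ Σ G ∈ ℂ^{N×M}, let W ∈ ℂ^{M×d} with ‖W‖_F² ≤ P for some P > 0, let A ∈ ℂ^{N×N} be Hermitian positive semidefinite, σ > 0, and Q = A + σ² I_N. Then log det(I_d + Wᴴ Hᴴ Q⁻¹ H W) ≤ d · log(1 + M · N^{3/2} · (L_T · L_R)² · P / σ²). -/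
open Matrix
open scoped ComplexOrder

/-- The Frobenius norm of a complex matrix. -/
noncomputable def frobNorm {m n : Type*} [Fintype m] [Fintype n]
    (A : Matrix m n ℂ) : ℝ :=
  Real.sqrt (∑ i, ∑ j, ‖A i j‖ ^ 2)

section Helpers

variable {n : Type*} [Fintype n] [DecidableEq n]

lemma my_trace_eq_sum_eigs {B : Matrix n n ℂ} (hB : B.IsHermitian) :
    B.trace = ∑ i, (hB.eigenvalues i : ℂ) := by
  conv_lhs => rw [hB.spectral_theorem, Unitary.conjStarAlgAut_apply]
  rw [Matrix.trace_mul_cycle,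
    (Matrix.mem_unitaryGroup_iff').mp (hB.eigenvectorUnitary).2, one_mul, trace_diagonal]
  rfl

lemma my_det_one_add {B : Matrix n n ℂ} (hB : B.IsHermitian) :
    ((1 : Matrix n n ℂ) + B).det = ∏ i, ((1 : ℂ) + (hB.eigenvalues i : ℂ)) := by
  have hU : (hB.eigenvectorUnitary : Matrix n n ℂ) * (star hB.eigenvectorUnitary : Matrix n n ℂ) = 1 :=
    (Matrix.mem_unitaryGroup_iff).mp (hB.eigenvectorUnitary).2
  have key : (1 : Matrix n n ℂ) + B =
      (hB.eigenvectorUnitary : Matrix n n ℂ) *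
        ((1 : Matrix n n ℂ) + diagonal (RCLike.ofReal ∘ hB.eigenvalues)) *
        (star hB.eigenvectorUnitary : Matrix n n ℂ) := by
    rw [Matrix.mul_add, Matrix.add_mul, Matrix.mul_one, hU]
    conv_lhs => rw [hB.spectral_theorem, Unitary.conjStarAlgAut_apply]
  rw [key, det_mul, det_mul, mul_right_comm, ← det_mul, hU, det_one, one_mul]
  have : (1 : Matrix n n ℂ) + diagonal (RCLike.ofReal ∘ hB.eigenvalues)
      = diagonal (fun i => 1 + (hB.eigenvalues i : ℂ)) := by
    rw [← diagonal_one, diagonal_add]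
    rfl
  rw [this, det_diagonal]

lemma my_trace_re_nonneg {M : Matrix n n ℂ} (hM : M.PosSemidef) : 0 ≤ M.trace.re := by
  rw [my_trace_eq_sum_eigs hM.1, Complex.re_sum]
  refine Finset.sum_nonneg fun i _ => ?_
  simpa using hM.eigenvalues_nonneg i


end Helpers

/-- Per-user rate bound (Lemma 3): with channel `H = Fᴴ Σ G` built from
unit-modulus field responses and path responses of modulus at most `1`,
beamformer power `‖W‖_F² ≤ P`, and interference-plus-noise matrix
`Q = A + σ² I` with `A ⪰ 0`, the rate satisfies
`log det(I + Wᴴ Hᴴ Q⁻¹ H W) ≤ d log(1 + M N^{3/2} (L_T L_R)² P / σ²)`. -/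
theorem stmt_18 {LR LT N M d : ℕ}
    (F : Matrix (Fin LR) (Fin N) ℂ) (hF : ∀ i j, ‖F i j‖ = 1)
    (G : Matrix (Fin LT) (Fin M) ℂ) (hG : ∀ i j, ‖G i j‖ = 1)
    (Sig : Matrix (Fin LR) (Fin LT) ℂ) (hSig : ∀ i j, ‖Sig i j‖ ≤ 1)
    (W : Matrix (Fin M) (Fin d) ℂ) (P : ℝ) (hP : 0 < P) (hW : frobNorm W ^ 2 ≤ P)
    (A : Matrix (Fin N) (Fin N) ℂ) (hA : A.PosSemidef) (σ : ℝ) (hσ : 0 < σ) :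
    Real.log (((1 : Matrix (Fin d) (Fin d) ℂ) +
        Wᴴ * (Fᴴ * Sig * G)ᴴ * (A + (σ ^ 2 : ℂ) • (1 : Matrix (Fin N) (Fin N) ℂ))⁻¹ *
          (Fᴴ * Sig * G) * W).det.re) ≤
      d * Real.log (1 + M * (N : ℝ) ^ ((3 : ℝ) / 2) * ((LT : ℝ) * LR) ^ 2 * P / σ ^ 2) := by
  classical
  set H := Fᴴ * Sig * G with hHdef
  set Q := A + (σ ^ 2 : ℂ) • (1 : Matrix (Fin N) (Fin N) ℂ) with hQdef
  set X := H * W with hXdef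
  have hσ2 : (0:ℝ) < σ ^ 2 := by positivity
  -- Q is positive definite
  have hone : ((σ ^ 2 : ℂ) • (1 : Matrix (Fin N) (Fin N) ℂ)).PosDef := by
    rw [smul_one_eq_diagonal]
    refine Matrix.PosDef.diagonal fun _ => ?_
    rw [show ((σ:ℂ)^2) = ((σ^2 : ℝ) : ℂ) by push_cast; ring]
    exact_mod_cast hσ2
  have hQ : Q.PosDef := Matrix.PosDef.posSemidef_add hA hone
  have hdet : IsUnit Q.det := hQ.det_pos.ne'.isUnit
  have hQQ : Q * Q⁻¹ = 1 := Matrix.mul_nonsing_inv Q hdet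
  have hQQ' : Q⁻¹ * Q = 1 := Matrix.nonsing_inv_mul Q hdet
  have hQinv : Q⁻¹.PosDef := hQ.inv
  have hBpsd : (Xᴴ * Q⁻¹ * X).PosSemidef := hQinv.posSemidef.conjTranspose_mul_mul_same X
  have hBeq : Wᴴ * Hᴴ * Q⁻¹ * H * W = Xᴴ * Q⁻¹ * X := by
    simp only [hXdef, hHdef, conjTranspose_mul, Matrix.mul_assoc]
  -- comparison matrix  u•1 - Q⁻¹ is PSD,  u = σ⁻²
  set c : ℂ := ((σ⁻¹ : ℝ) : ℂ) with hcdef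
  set u : ℝ := (σ ^ 2)⁻¹ with hudef
  have hcc : c * c = ((u : ℝ) : ℂ) := by rw [hcdef, hudef]; push_cast; ring
  have hus : ((u : ℝ) : ℂ) * ((σ:ℂ) ^ 2) = 1 := by
    rw [hudef]; push_cast; field_simp
  set S : Matrix (Fin N) (Fin N) ℂ := (c • A)ᴴ * (c • A) + A with hSdef
  have hS : S.PosSemidef := (posSemidef_conjTranspose_mul_self (c • A)).add hA
  have hSeq : S = ((u:ℝ):ℂ) • (Q * Q) - Q := by
    have hsc : star c = c := by rw [hcdef]; exact Complex.conj_ofReal _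
    rw [hSdef, conjTranspose_smul, hA.1.eq, hsc, hQdef]
    simp only [Matrix.smul_mul, Matrix.mul_smul, smul_smul, Matrix.add_mul, Matrix.mul_add,
      Matrix.mul_one, Matrix.one_mul, smul_add, hcc, ← mul_assoc, hus, one_mul, sub_eq_iff_eq_add]
    simp only [one_smul]
    abel
  have hCpsd : (((u:ℝ):ℂ) • (1 : Matrix (Fin N) (Fin N) ℂ) - Q⁻¹).PosSemidef := by
    have h1 : Q⁻¹ᴴ * S * Q⁻¹ = ((u:ℝ):ℂ) • 1 - Q⁻¹ := by
      rw [hQinv.1.eq, hSeq]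
      simp only [Matrix.mul_sub, Matrix.sub_mul, Matrix.mul_smul, Matrix.smul_mul,
        Matrix.mul_assoc, hQQ, Matrix.mul_one]
      rw [hQQ']
    exact h1 ▸ hS.conjTranspose_mul_mul_same Q⁻¹
  have hCX : (Xᴴ * (((u:ℝ):ℂ) • (1 : Matrix (Fin N) (Fin N) ℂ) - Q⁻¹) * X).PosSemidef :=
    hCpsd.conjTranspose_mul_mul_same X
  have htr0 := my_trace_re_nonneg hCX
  have hexp : Xᴴ * (((u:ℝ):ℂ) • (1 : Matrix (Fin N) (Fin N) ℂ) - Q⁻¹) * X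
      = ((u:ℝ):ℂ) • (Xᴴ * X) - Xᴴ * Q⁻¹ * X := by
    simp only [Matrix.mul_sub, Matrix.sub_mul, Matrix.mul_smul, Matrix.smul_mul,
      Matrix.mul_one, Matrix.one_mul]
  have htrB : (Xᴴ * Q⁻¹ * X).trace.re ≤ u * (Xᴴ * X).trace.re := by
    rw [hexp, trace_sub, trace_smul] at htr0
    have : (((u:ℝ):ℂ) • (Xᴴ * X).trace).re = u * (Xᴴ * X).trace.re := by
      rw [smul_eq_mul, Complex.re_ofReal_mul]
    rw [Complex.sub_re, this] at htr0
    linarith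
  have htrXX : (Xᴴ * X).trace.re = ∑ j, ∑ i, ‖X i j‖ ^ 2 := by
    simp only [Matrix.trace, Matrix.diag, Matrix.mul_apply, Matrix.conjTranspose_apply,
      Complex.re_sum, RCLike.star_def]
    congr 1; funext j; congr 1; funext i
    rw [mul_comm, Complex.mul_conj, Complex.ofReal_re, Complex.normSq_eq_norm_sq]
  -- Cauchy–Schwarz / Frobenius submultiplicativity
  have hCS : ∑ j, ∑ i, ‖X i j‖ ^ 2
      ≤ (∑ i, ∑ j, ‖H i j‖ ^ 2) * (∑ i, ∑ j, ‖W i j‖ ^ 2) := by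
    have hpt : ∀ (i : Fin N) (k : Fin d), ‖X i k‖ ^ 2
        ≤ (∑ j, ‖H i j‖ ^ 2) * (∑ j, ‖W j k‖ ^ 2) := by
      intro i k
      have h1 : ‖X i k‖ ≤ ∑ j, ‖H i j‖ * ‖W j k‖ := by
        calc ‖X i k‖ = ‖∑ j, H i j * W j k‖ := by
              rw [hXdef, Matrix.mul_apply]
          _ ≤ ∑ j, ‖H i j * W j k‖ := norm_sum_le _ _
          _ = ∑ j, ‖H i j‖ * ‖W j k‖ := by simp [norm_mul]
      calc ‖X i k‖ ^ 2
          ≤ (∑ j, ‖H i j‖ * ‖W j k‖) ^ 2 :=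
            pow_le_pow_left₀ (norm_nonneg _) h1 2
        _ ≤ (∑ j, ‖H i j‖ ^ 2) * (∑ j, ‖W j k‖ ^ 2) :=
            Finset.sum_mul_sq_le_sq_mul_sq _ _ _
    calc ∑ k, ∑ i, ‖X i k‖ ^ 2
        ≤ ∑ k : Fin d, ∑ i : Fin N,
            (∑ j, ‖H i j‖ ^ 2) * (∑ j, ‖W j k‖ ^ 2) :=
          Finset.sum_le_sum fun k _ => Finset.sum_le_sum fun i _ => hpt i k
      _ = ∑ k : Fin d, (∑ i, ∑ j, ‖H i j‖ ^ 2) * (∑ j, ‖W j k‖ ^ 2) := by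
          refine Finset.sum_congr rfl fun k _ => ?_
          rw [← Finset.sum_mul]
      _ = (∑ i, ∑ j, ‖H i j‖ ^ 2) * ∑ k : Fin d, ∑ j, ‖W j k‖ ^ 2 := by
          rw [← Finset.mul_sum]
      _ = (∑ i, ∑ j, ‖H i j‖ ^ 2) * (∑ i, ∑ j, ‖W i j‖ ^ 2) := by
          congr 1
          exact Finset.sum_comm
  -- entrywise bound on H
  have hHb : ∀ i j, ‖H i j‖ ≤ (LR : ℝ) * LT := by
    intro i j
    have h1 : H i j = ∑ b, (∑ a, (starRingEnd ℂ) (F a i) * Sig a b) * G b j := by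
      simp [hHdef, Matrix.mul_apply, Matrix.conjTranspose_apply, RCLike.star_def]
    rw [h1]
    calc ‖∑ b, (∑ a, (starRingEnd ℂ) (F a i) * Sig a b) * G b j‖
        ≤ ∑ b, ‖(∑ a, (starRingEnd ℂ) (F a i) * Sig a b) * G b j‖ :=
          norm_sum_le _ _
      _ = ∑ b, ‖∑ a, (starRingEnd ℂ) (F a i) * Sig a b‖ := by
          simp [norm_mul, hG]
      _ ≤ ∑ b : Fin LT, ∑ a : Fin LR, ‖(starRingEnd ℂ) (F a i) * Sig a b‖ :=
          Finset.sum_le_sum fun b _ => norm_sum_le _ _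
      _ ≤ ∑ _b : Fin LT, ∑ _a : Fin LR, (1:ℝ) := by
          refine Finset.sum_le_sum fun b _ => Finset.sum_le_sum fun a _ => ?_
          rw [norm_mul, Complex.norm_conj, hF]
          simpa using hSig a b
      _ = (LR : ℝ) * LT := by simp [mul_comm]
  have hHsum : ∑ i, ∑ j, ‖H i j‖ ^ 2 ≤ (N:ℝ) * M * ((LT:ℝ) * LR) ^ 2 := by
    calc ∑ i, ∑ j, ‖H i j‖ ^ 2
        ≤ ∑ _i : Fin N, ∑ _j : Fin M, ((LT:ℝ) * LR) ^ 2 := by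
          refine Finset.sum_le_sum fun i _ => Finset.sum_le_sum fun j _ => ?_
          calc ‖H i j‖ ^ 2 ≤ ((LR:ℝ) * LT) ^ 2 :=
                pow_le_pow_left₀ (norm_nonneg _) (hHb i j) 2
            _ = ((LT:ℝ) * LR) ^ 2 := by ring
      _ = (N:ℝ) * M * ((LT:ℝ) * LR) ^ 2 := by
          simp [Finset.sum_const]
          ring
  have hW0 : (0:ℝ) ≤ ∑ i, ∑ j, ‖W i j‖ ^ 2 := by positivity
  have hWsum : ∑ i, ∑ j, ‖W i j‖ ^ 2 ≤ P := by
    simp only [frobNorm] at hW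
    rwa [Real.sq_sqrt hW0] at hW
  -- eigenvalue bookkeeping
  have hlam0 : ∀ i, 0 ≤ hBpsd.1.eigenvalues i := fun i => hBpsd.eigenvalues_nonneg i
  set t := ∑ i, hBpsd.1.eigenvalues i with htdef
  have ht0 : 0 ≤ t := Finset.sum_nonneg fun i _ => hlam0 i
  have hlamt : ∀ i, hBpsd.1.eigenvalues i ≤ t := fun i =>
    Finset.single_le_sum (fun j _ => hlam0 j) (Finset.mem_univ i)
  have hu0 : (0:ℝ) ≤ u := by rw [hudef]; positivity
  have htboundNM : t ≤ (N:ℝ) * M * ((LT:ℝ) * LR) ^ 2 * P / σ ^ 2 := by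
    have h1 : t = (Xᴴ * Q⁻¹ * X).trace.re := by
      rw [my_trace_eq_sum_eigs hBpsd.1, Complex.re_sum]
      simp [htdef]
    rw [h1]
    have hXX : (Xᴴ * X).trace.re ≤ (N:ℝ) * M * ((LT:ℝ) * LR) ^ 2 * P := by
      rw [htrXX]
      calc ∑ j, ∑ i, ‖X i j‖ ^ 2
          ≤ (∑ i, ∑ j, ‖H i j‖ ^ 2) * (∑ i, ∑ j, ‖W i j‖ ^ 2) := hCS
        _ ≤ ((N:ℝ) * M * ((LT:ℝ) * LR) ^ 2) * P := by
            refine mul_le_mul hHsum hWsum hW0 ?_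
            positivity
        _ = (N:ℝ) * M * ((LT:ℝ) * LR) ^ 2 * P := by ring
    calc (Xᴴ * Q⁻¹ * X).trace.re ≤ u * (Xᴴ * X).trace.re := htrB
      _ ≤ u * ((N:ℝ) * M * ((LT:ℝ) * LR) ^ 2 * P) := by
          refine mul_le_mul_of_nonneg_left hXX hu0
      _ = (N:ℝ) * M * ((LT:ℝ) * LR) ^ 2 * P / σ ^ 2 := by
          rw [hudef]
          field_simp
  have hN32 : (N:ℝ) ≤ (N:ℝ) ^ ((3:ℝ)/2) := by
    rcases Nat.eq_zero_or_pos N with h | h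
    · subst h
      simp [Real.zero_rpow (by norm_num : ((3:ℝ)/2) ≠ 0)]
    · have h1 : (1:ℝ) ≤ (N:ℝ) := by exact_mod_cast h
      calc (N:ℝ) = (N:ℝ) ^ (1:ℝ) := (Real.rpow_one _).symm
        _ ≤ (N:ℝ) ^ ((3:ℝ)/2) := Real.rpow_le_rpow_of_exponent_le h1 (by norm_num)
  have htCb : t ≤ (M:ℝ) * (N:ℝ) ^ ((3:ℝ)/2) * ((LT:ℝ) * LR) ^ 2 * P / σ ^ 2 := by
    refine htboundNM.trans ?_
    have h2 : (N:ℝ) * M * ((LT:ℝ) * LR) ^ 2 * P ≤ (M:ℝ) * (N:ℝ) ^ ((3:ℝ)/2) * ((LT:ℝ) * LR) ^ 2 * P := by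
      calc (N:ℝ) * M * ((LT:ℝ) * LR) ^ 2 * P = (M:ℝ) * (N:ℝ) * ((LT:ℝ) * LR) ^ 2 * P := by ring
        _ ≤ (M:ℝ) * (N:ℝ) ^ ((3:ℝ)/2) * ((LT:ℝ) * LR) ^ 2 * P := by gcongr
    exact (div_le_div_iff_of_pos_right hσ2).mpr h2
  have hCb0 : (0:ℝ) ≤ (M:ℝ) * (N:ℝ) ^ ((3:ℝ)/2) * ((LT:ℝ) * LR) ^ 2 * P / σ ^ 2 := by positivity
  -- determinant as product of eigenvalues
  have hdetre : ((1 : Matrix (Fin d) (Fin d) ℂ) + Xᴴ * Q⁻¹ * X).det.re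
      = ∏ i, (1 + hBpsd.1.eigenvalues i) := by
    rw [my_det_one_add hBpsd.1]
    have : ∏ i, ((1:ℂ) + (hBpsd.1.eigenvalues i : ℂ))
        = (((∏ i, (1 + hBpsd.1.eigenvalues i)) : ℝ) : ℂ) := by
      push_cast
      rfl
    rw [this, Complex.ofReal_re]
  rw [hBeq, hdetre]
  have hprodpos : 0 < ∏ i, (1 + hBpsd.1.eigenvalues i) :=
    Finset.prod_pos fun i _ => by have := hlam0 i; linarith
  have hprodle : ∏ i, (1 + hBpsd.1.eigenvalues i) ≤ (1 + t) ^ d := by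
    calc ∏ i, (1 + hBpsd.1.eigenvalues i) ≤ ∏ _i : Fin d, (1 + t) :=
          Finset.prod_le_prod (fun i _ => by have := hlam0 i; linarith)
            (fun i _ => by have := hlamt i; linarith)
      _ = (1 + t) ^ d := by simp
  calc Real.log (∏ i, (1 + hBpsd.1.eigenvalues i)) ≤ Real.log ((1 + t) ^ d) :=
        Real.log_le_log hprodpos hprodle
    _ = d * Real.log (1 + t) := by rw [Real.log_pow]
    _ ≤ d * Real.log (1 + (M:ℝ) * (N:ℝ) ^ ((3:ℝ)/2) * ((LT:ℝ) * LR) ^ 2 * P / σ ^ 2) := by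
        refine mul_le_mul_of_nonneg_left ?_ (by positivity)
        exact Real.log_le_log (by linarith) (by linarith)
end
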